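/- Let G be a finite group and k a field. Let ι be the morphism in Rep k G from the trivial representation of G on k to the left regular representation of G on the monoid algebra k[G] (with G acting by left multiplication), sending 1 to the sum ∑_{g ∈ G} g. Then ι admits a retraction in the category Rep k G (i.e., there is a G-equivariant k-linear map r : k[G] → k with r ∘ ι = id) if and only if every monomorphism in Rep k G is a split monomorphism. (This is the finite-group instance of the paper's Proposition characterizing linearly reductive groups: G is linearly reductive iff the natural homomorphism k → k[G] is an embedding of a direct summand in the category of representations.) -/

import Mathlib

open CategoryTheory Finsupp

universe u

variable (k G : Type u) [Field k] [Group G] [Fintype G]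

/-- The morphism in `Rep k G` from the trivial representation `k` to the left regular
representation `k[G]` sending `1` to `∑ g, g`. -/
noncomputable def sumOfGroupElements : Rep.trivial k G k ⟶ Rep.leftRegular k G :=
  Rep.ofHom
  { toLinearMap :=
      LinearMap.toSpanSingleton k (MonoidAlgebra k G) (∑ g : G, MonoidAlgebra.single g (1 : k))
    isIntertwining' := fun g => by
      refine LinearMap.ext fun (r : k) => ?_
      show (LinearMap.toSpanSingleton k (MonoidAlgebra k G) _) r =
        (Representation.ofMulAction k G G g) ((LinearMap.toSpanSingleton k (MonoidAlgebra k G) _) r)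
      simp only [LinearMap.toSpanSingleton_apply, map_smul]
      congr 1
      rw [map_sum]
      simp only [Representation.ofMulAction_single]
      exact (Fintype.sum_bijective (fun x : G => (show G from g) • x)
        (MulAction.bijective (show G from g)) _ _ (fun x => rfl)).symm }

/-- For a finite group `G` and a field `k`, the embedding of the trivial representation into
the left regular representation (sending `1` to `∑ g, g`) admits a retraction in `Rep k G`
iff every monomorphism in `Rep k G` splits. -/
theorem sumOfGroupElements_retraction_iff_mono_split :
    (∃ r : Rep.leftRegular k G ⟶ Rep.trivial k G k,
        sumOfGroupElements k G ≫ r = 𝟙 (Rep.trivial k G k)) ↔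
      ∀ {X Y : Rep.{u} k G} (f : X ⟶ Y), Mono f → IsSplitMono f := by
  constructor
  · rintro ⟨r, hr⟩ X Y f hf
    haveI : NeZero (Fintype.card G : k) := by
      have hconst : ∀ g : G, r.hom.toLinearMap (MonoidAlgebra.single g 1) =
          r.hom.toLinearMap (MonoidAlgebra.single 1 1) := by
        intro g
        have := Representation.IntertwiningMap.isIntertwining _ _ r.hom g (MonoidAlgebra.single (1 : G) (1 : k))
        have h2 : ((Rep.leftRegular k G).ρ g) (MonoidAlgebra.single (1:G) (1:k)) = MonoidAlgebra.single g 1 := by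
          show (Representation.ofMulAction k G G g) _ = _
          rw [Representation.ofMulAction_single]; simp
        rw [← h2]
        exact this.trans rfl
      have hval : r.hom.toLinearMap (∑ g : G, MonoidAlgebra.single g (1:k)) = (1:k) := by
        have h0 := congrArg (fun f => (Rep.Hom.hom f).toLinearMap) hr
        have h1 : (r.hom.toLinearMap.comp
            (LinearMap.toSpanSingleton k (MonoidAlgebra k G) (∑ g : G, MonoidAlgebra.single g (1:k)))) =
            LinearMap.id := h0
        have := LinearMap.congr_fun h1 (1 : k)
        exact (congrArg r.hom.toLinearMap
          (LinearMap.toSpanSingleton_apply_one (R := k) (M := MonoidAlgebra k G) _).symm).trans this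
      have hsum : (∑ _g : G, r.hom.toLinearMap (MonoidAlgebra.single 1 1)) =
          r.hom.toLinearMap (∑ g : G, MonoidAlgebra.single g (1:k)) := by
        rw [map_sum]
        exact Finset.sum_congr rfl fun g _ => (hconst g).symm
      rw [hval, Finset.sum_const, Finset.card_univ] at hsum
      refine ⟨fun hzero => ?_⟩
      have hsum' : (Fintype.card G : k) * (show k from
          r.hom.toLinearMap (MonoidAlgebra.single 1 1)) = (1 : k) := by
        rw [← nsmul_eq_mul]; exact hsum
      rw [hzero, zero_mul] at hsum'
      exact zero_ne_one hsum'
    haveI : NeZero (Nat.card G : k) := by rw [Nat.card_eq_fintype_card]; assumption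
    let E := Rep.equivalenceModuleMonoidAlgebra (k := k) (G := G)
    haveI : Mono (E.functor.map f) := inferInstance
    have hker : LinearMap.ker (E.functor.map f).hom = ⊥ :=
      (ModuleCat.mono_iff_ker_eq_bot _).mp inferInstance
    obtain ⟨g, hg⟩ := MonoidAlgebra.exists_leftInverse_of_injective
      (E.functor.map f).hom hker
    have hsplit : E.functor.map f ≫ ModuleCat.ofHom g = 𝟙 (E.functor.obj X) := by
      ext x
      exact DFunLike.congr_fun hg x
    refine IsSplitMono.mk' ⟨E.functor.preimage (ModuleCat.ofHom g), E.functor.map_injective ?_⟩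
    rw [Functor.map_comp]
    erw [Functor.map_preimage, hsplit]
    exact (E.functor.map_id X).symm
  · intro h
    have hmono : Mono (sumOfGroupElements k G) := by
      apply (forget₂ (Rep k G) (ModuleCat k)).mono_of_mono_map
      rw [ModuleCat.mono_iff_ker_eq_bot]
      show LinearMap.ker (LinearMap.toSpanSingleton k (MonoidAlgebra k G)
        (∑ g : G, MonoidAlgebra.single g (1 : k))) = ⊥
      rw [LinearMap.ker_eq_bot]
      have hne : (∑ g : G, MonoidAlgebra.single g (1 : k)) ≠ 0 := by
        classical
        intro h0
        have := congrArg (fun v : MonoidAlgebra k G => v.coeff 1) h0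
        simp only [MonoidAlgebra.coeff_sum, MonoidAlgebra.coeff_single, MonoidAlgebra.coeff_zero, Finsupp.finset_sum_apply, Finsupp.single_apply, Finsupp.coe_zero,
          Pi.zero_apply] at this
        rw [Finset.sum_ite_eq' Finset.univ (1 : G) (fun _ => (1 : k))] at this
        simp at this
      intro a b hab
      exact smul_left_injective k hne hab
    haveI := h (sumOfGroupElements k G) hmono
    exact ⟨retraction (sumOfGroupElements k G), IsSplitMono.id _⟩
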